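/- Let (X_i)_{i≥1} be independent real random variables such that for each i, X_i has probability density p_i and p_i ≺ p_{i+1} in the MLR order. Let F : ℝ^{m+1} → ℝ be continuous and nondecreasing in each of its arguments (with the other arguments fixed). Then for all n ≥ 1, m ≥ 0 and all real t, P( F(X_n, X_{n+1}, ..., X_{n+m}) ≥ t ) ≤ P( F(X_{n+1}, X_{n+2}, ..., X_{n+m+1}) ≥ t ). -/

import Mathlib

open MeasureTheory ProbabilityTheory
open scoped ENNReal

/-- A real random variable `X` has probability density `f` (w.r.t. Lebesgue). -/
def HasDensity {Ω : Type*} [MeasurableSpace Ω] (X : Ω → ℝ) (P : Measure Ω)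
    (f : ℝ → ℝ) : Prop :=
  Measure.map X P = volume.withDensity (fun x => ENNReal.ofReal (f x))

section Aux

open Set Function

/-- Binary rearrangement inequality in `ℝ≥0∞`. -/
lemma ennreal_rearrange {a b c d : ℝ≥0∞} (hab : a ≤ b) (hcd : c ≤ d) :
    a * d + b * c ≤ a * c + b * d := by
  obtain ⟨e, rfl⟩ := exists_add_of_le hcd
  calc a * (c + e) + b * c = (a * c + b * c) + a * e := by ring
    _ ≤ (a * c + b * c) + b * e := add_le_add_right (mul_le_mul_left hab e) _
    _ = a * c + b * (c + e) := by ring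

lemma isProbabilityMeasure_withDensity' {p : ℝ → ℝ≥0∞} (hp1 : ∫⁻ x, p x = 1) :
    IsProbabilityMeasure (volume.withDensity p) :=
  ⟨by rw [withDensity_apply _ MeasurableSet.univ, Measure.restrict_univ, hp1]⟩

/-- MLR order implies stochastic dominance (in lintegral form). -/
lemma mlr_lintegral_mono (p q : ℝ → ℝ≥0∞) (hp : Measurable p) (hq : Measurable q)
    (hp1 : ∫⁻ x, p x = 1) (hq1 : ∫⁻ x, q x = 1)
    (hmlr : ∀ x y : ℝ, x ≤ y → p y * q x ≤ p x * q y)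
    (h : ℝ → ℝ≥0∞) (hh : Measurable h) (hmono : Monotone h) (hle : ∀ x, h x ≤ 1) :
    ∫⁻ x, h x ∂(volume.withDensity p) ≤ ∫⁻ x, h x ∂(volume.withDensity q) := by
  rw [lintegral_withDensity_eq_lintegral_mul _ hp hh,
    lintegral_withDensity_eq_lintegral_mul _ hq hh]
  simp only [Pi.mul_apply]
  set A := ∫⁻ x, p x * h x with hA
  set B := ∫⁻ x, q x * h x with hB
  have key : ∀ x y : ℝ,
      (p x * h x) * q y + (p y * h y) * q x ≤ (q x * h x) * p y + (q y * h y) * p x := by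
    intro x y
    rcases le_total x y with hxy | hxy
    · have := ennreal_rearrange (hmono hxy) (hmlr x y hxy)
      calc (p x * h x) * q y + (p y * h y) * q x
          = h x * (p x * q y) + h y * (p y * q x) := by ring
        _ ≤ h x * (p y * q x) + h y * (p x * q y) := this
        _ = (q x * h x) * p y + (q y * h y) * p x := by ring
    · have := ennreal_rearrange (hmono hxy) (hmlr y x hxy)
      calc (p x * h x) * q y + (p y * h y) * q x
          = h y * (p y * q x) + h x * (p x * q y) := by ring
        _ ≤ h y * (p x * q y) + h x * (p y * q x) := this
        _ = (q x * h x) * p y + (q y * h y) * p x := by ring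
  have e1 : ∀ y : ℝ, ∫⁻ x, ((p x * h x) * q y + (p y * h y) * q x) = A * q y + p y * h y := by
    intro y
    rw [lintegral_add_left ((show Measurable fun x => p x * h x from hp.mul hh).mul_const _),
      lintegral_mul_const _ (show Measurable fun x => p x * h x from hp.mul hh), lintegral_const_mul _ hq, hq1, mul_one]
  have e2 : ∀ y : ℝ, ∫⁻ x, ((q x * h x) * p y + (q y * h y) * p x) = B * p y + q y * h y := by
    intro y
    rw [lintegral_add_left ((show Measurable fun x => q x * h x from hq.mul hh).mul_const _),
      lintegral_mul_const _ (show Measurable fun x => q x * h x from hq.mul hh), lintegral_const_mul _ hp, hp1, mul_one]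
  have main : A + A ≤ B + B := by
    calc A + A = ∫⁻ y, (A * q y + p y * h y) := by
          rw [lintegral_add_left (hq.const_mul A), lintegral_const_mul _ hq, hq1, mul_one, ← hA]
      _ = ∫⁻ y, ∫⁻ x, ((p x * h x) * q y + (p y * h y) * q x) :=
          lintegral_congr fun y => (e1 y).symm
      _ ≤ ∫⁻ y, ∫⁻ x, ((q x * h x) * p y + (q y * h y) * p x) :=
          lintegral_mono fun y => lintegral_mono fun x => key x y
      _ = ∫⁻ y, (B * p y + q y * h y) := lintegral_congr fun y => e2 y
      _ = B + B := by
          rw [lintegral_add_left (hp.const_mul B), lintegral_const_mul _ hp, hp1, mul_one, ← hB]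
  have h2 : (2 : ℝ≥0∞) * A ≤ 2 * B := by rw [two_mul, two_mul]; exact main
  exact (ENNReal.mul_le_mul_iff_right (by norm_num) (by norm_num)).mp h2

/-- A coordinatewise nondecreasing function is monotone. -/
lemma monotone_of_update {N : ℕ} (F : (Fin N → ℝ) → ℝ)
    (h : ∀ (j : Fin N) (x : Fin N → ℝ) (a b : ℝ), a ≤ b →
      F (Function.update x j a) ≤ F (Function.update x j b)) :
    Monotone F := by
  classical
  intro x y hxy
  have key : ∀ S : Finset (Fin N), F x ≤ F (fun j => if j ∈ S then y j else x j) := by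
    intro S
    induction S using Finset.induction_on with
    | empty => simp
    | @insert j S hj ih =>
      refine ih.trans ?_
      have h1 : (fun i => if i ∈ insert j S then y i else x i)
          = Function.update (fun i => if i ∈ S then y i else x i) j (y j) := by
        funext i
        by_cases hij : i = j
        · subst hij; simp [hj]
        · simp [Function.update_of_ne hij, hij]
      have h2 : (fun i => if i ∈ S then y i else x i)
          = Function.update (fun i => if i ∈ S then y i else x i) j (x j) := by
        funext i
        by_cases hij : i = j
        · subst hij; simp [hj]
        · simp [Function.update_of_ne hij]
      rw [h1]
      conv_lhs => rw [h2]
      exact h j _ (x j) (y j) (hxy j)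
  have := key Finset.univ
  simpa using this

lemma fin_cons_le_cons {N : ℕ} {a a' : ℝ} {b b' : Fin N → ℝ} (ha : a ≤ a') (hb : b ≤ b') :
    (Fin.cons a b : Fin (N + 1) → ℝ) ≤ Fin.cons a' b' := fun j => by
  refine Fin.cases ?_ ?_ j
  · simpa using ha
  · intro k; simpa using hb k

lemma measurable_finCons {N : ℕ} :
    Measurable (fun z : ℝ × (Fin N → ℝ) => (Fin.cons z.1 z.2 : Fin (N + 1) → ℝ)) := by
  refine measurable_pi_lambda _ fun j => ?_
  refine Fin.cases ?_ ?_ j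
  · simpa using measurable_fst
  · intro k; simpa using (show Measurable fun c : ℝ × (Fin N → ℝ) => c.2 k from
      (measurable_pi_apply k).comp measurable_snd)

/-- Product measures of MLR-ordered densities are ordered on monotone functions. -/
lemma pi_lintegral_mono :
    ∀ (N : ℕ) (p q : Fin N → ℝ → ℝ≥0∞),
      (∀ j, Measurable (p j)) → (∀ j, Measurable (q j)) →
      (∀ j, ∫⁻ x, p j x = 1) → (∀ j, ∫⁻ x, q j x = 1) →
      (∀ (j) (x y : ℝ), x ≤ y → p j y * q j x ≤ p j x * q j y) →
      ∀ g : (Fin N → ℝ) → ℝ≥0∞, Measurable g → Monotone g → (∀ x, g x ≤ 1) →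
      ∫⁻ x, g x ∂(Measure.pi fun j => volume.withDensity (p j)) ≤
        ∫⁻ x, g x ∂(Measure.pi fun j => volume.withDensity (q j)) := by
  intro N
  induction N with
  | zero =>
    intro p q _ _ _ _ _ g _ _ _
    rw [Measure.pi_of_empty, Measure.pi_of_empty]
  | succ N ih =>
    intro p q hpm hqm hp1 hq1 hmlr g hg hgm hg1
    haveI hPp : ∀ j, IsProbabilityMeasure (volume.withDensity (p j)) :=
      fun j => isProbabilityMeasure_withDensity' (hp1 j)
    haveI hPq : ∀ j, IsProbabilityMeasure (volume.withDensity (q j)) :=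
      fun j => isProbabilityMeasure_withDensity' (hq1 j)
    set G : ℝ × (Fin N → ℝ) → ℝ≥0∞ := fun z => g (Fin.cons z.1 z.2) with hGdef
    have hGm : Measurable G := hg.comp measurable_finCons
    set e := MeasurableEquiv.piFinSuccAbove (fun _ : Fin (N + 1) => ℝ) 0 with he
    have hge : ∀ x : Fin (N + 1) → ℝ, G (e x) = g x := by
      intro x
      simp only [he, hGdef, MeasurableEquiv.piFinSuccAbove_apply]
      exact congrArg g (Fin.cons_self_tail x)
    have hpiμ := measurePreserving_piFinSuccAbove (fun j => volume.withDensity (p j)) 0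
    have hpiν := measurePreserving_piFinSuccAbove (fun j => volume.withDensity (q j)) 0
    have hinner : ∀ a : ℝ,
        ∫⁻ b, G (a, b) ∂(Measure.pi fun j => volume.withDensity (p (Fin.succAbove 0 j))) ≤
        ∫⁻ b, G (a, b) ∂(Measure.pi fun j => volume.withDensity (q (Fin.succAbove 0 j))) := by
      intro a
      refine ih (fun j => p (Fin.succAbove 0 j)) (fun j => q (Fin.succAbove 0 j))
        (fun j => hpm _) (fun j => hqm _) (fun j => hp1 _) (fun j => hq1 _)
        (fun j => hmlr _) (fun b => G (a, b)) (hGm.comp measurable_prodMk_left)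
        (fun b b' hbb => hgm (fin_cons_le_cons le_rfl hbb)) (fun b => hg1 _)
    have houter :
        ∫⁻ a, (∫⁻ b, G (a, b) ∂(Measure.pi fun j => volume.withDensity (q (Fin.succAbove 0 j))))
            ∂(volume.withDensity (p 0)) ≤
        ∫⁻ a, (∫⁻ b, G (a, b) ∂(Measure.pi fun j => volume.withDensity (q (Fin.succAbove 0 j))))
            ∂(volume.withDensity (q 0)) := by
      refine mlr_lintegral_mono (p 0) (q 0) (hpm 0) (hqm 0) (hp1 0) (hq1 0) (hmlr 0) _
        hGm.lintegral_prod_right' ?_ ?_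
      · intro a a' haa
        exact lintegral_mono fun b => hgm (fin_cons_le_cons haa le_rfl)
      · intro a
        calc ∫⁻ b, G (a, b) ∂(Measure.pi fun j => volume.withDensity (q (Fin.succAbove 0 j)))
            ≤ ∫⁻ _, 1 ∂(Measure.pi fun j => volume.withDensity (q (Fin.succAbove 0 j))) :=
              lintegral_mono fun b => hg1 _
          _ = 1 := by simp
    calc ∫⁻ x, g x ∂(Measure.pi fun j => volume.withDensity (p j))
        = ∫⁻ z, G z ∂((volume.withDensity (p 0)).prod
            (Measure.pi fun j => volume.withDensity (p (Fin.succAbove 0 j)))) := by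
          rw [← hpiμ.lintegral_comp hGm]
          exact lintegral_congr fun x => (hge x).symm
      _ = ∫⁻ a, ∫⁻ b, G (a, b)
            ∂(Measure.pi fun j => volume.withDensity (p (Fin.succAbove 0 j)))
            ∂(volume.withDensity (p 0)) := lintegral_prod G hGm.aemeasurable
      _ ≤ ∫⁻ a, ∫⁻ b, G (a, b)
            ∂(Measure.pi fun j => volume.withDensity (q (Fin.succAbove 0 j)))
            ∂(volume.withDensity (p 0)) := lintegral_mono fun a => hinner a
      _ ≤ ∫⁻ a, ∫⁻ b, G (a, b)
            ∂(Measure.pi fun j => volume.withDensity (q (Fin.succAbove 0 j)))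
            ∂(volume.withDensity (q 0)) := houter
      _ = ∫⁻ z, G z ∂((volume.withDensity (q 0)).prod
            (Measure.pi fun j => volume.withDensity (q (Fin.succAbove 0 j)))) :=
          (lintegral_prod G hGm.aemeasurable).symm
      _ = ∫⁻ x, g x ∂(Measure.pi fun j => volume.withDensity (q j)) := by
          rw [← hpiν.lintegral_comp hGm]
          exact lintegral_congr fun x => hge x

/-- The joint law of finitely many independent random variables is the product measure. -/
lemma joint_law_eq_pi {Ω ι : Type*} [MeasurableSpace Ω] {P : Measure Ω}
    [IsProbabilityMeasure P] {f : ι → Ω → ℝ} (hf : ∀ i, Measurable (f i))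
    (h : iIndepFun f P) {N : ℕ} (u : Fin N → ι)
    (hu : Function.Injective u) :
    Measure.map (fun ω j => f (u j) ω) P = Measure.pi (fun j => Measure.map (f (u j)) P) := by
  classical
  haveI : ∀ j, IsProbabilityMeasure (Measure.map (f (u j)) P) :=
    fun j => Measure.isProbabilityMeasure_map (hf (u j)).aemeasurable
  refine (Measure.pi_eq fun s hs => ?_).symm
  rw [Measure.map_apply (measurable_pi_lambda _ fun j => hf (u j)) (MeasurableSet.univ_pi hs)]
  have hpre : (fun ω j => f (u j) ω) ⁻¹' (Set.pi Set.univ s) = ⋂ j, f (u j) ⁻¹' s j := by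
    ext ω; simp [Set.mem_pi]
  set T : Finset ι := Finset.image u Finset.univ with hT
  set s' : ι → Set ℝ := fun i => ⋂ j ∈ Finset.univ.filter (fun j => u j = i), s j with hs'
  have hs'm : ∀ i, MeasurableSet (s' i) := fun i =>
    MeasurableSet.iInter fun j => MeasurableSet.iInter fun _ => hs j
  have hsu : ∀ j : Fin N, s' (u j) = s j := by
    intro j
    have hfil : Finset.univ.filter (fun k => u k = u j) = {j} := by
      ext k
      simp [Finset.mem_filter, hu.eq_iff]
    simp only [hs', hfil]
    simp
  have hInter : (⋂ j, f (u j) ⁻¹' s j) = ⋂ i ∈ T, f i ⁻¹' s' i := by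
    ext ω
    simp only [Set.mem_iInter, Set.mem_preimage, hT, Finset.mem_image, Finset.mem_univ,
      true_and]
    constructor
    · rintro hω i ⟨j, rfl⟩
      rw [hsu]
      exact hω j
    · intro hω j
      have := hω (u j) ⟨j, rfl⟩
      rwa [hsu] at this
  have hmeas : ∀ i ∈ T, MeasurableSet[MeasurableSpace.comap (f i) inferInstance]
      (f i ⁻¹' s' i) := fun i _ => ⟨s' i, hs'm i, rfl⟩
  rw [hpre, hInter, h.meas_biInter hmeas, hT,
    Finset.prod_image (fun a _ b _ hab => hu hab)]
  refine Finset.prod_congr rfl fun j _ => ?_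
  rw [hsu, Measure.map_apply (hf (u j)) (hs j)]

end Aux

/-- **Stochastic monotonicity along an exploding process.**
Let `X 1, X 2, ...` (here `X (i+1)` is the `i`-th variable, `i ≥ 1`) be
independent with `X_i` of density `p_i`, where `p_i ≺ p_{i+1}` in the MLR order.
If `F : ℝ^{m+1} → ℝ` is continuous and nondecreasing in each argument, then
`P(F(X_n, ..., X_{n+m}) ≥ t) ≤ P(F(X_{n+1}, ..., X_{n+m+1}) ≥ t)`. -/
theorem monotone_function_stochastically_increasing
    {Ω : Type*} [MeasurableSpace Ω] (P : Measure Ω) [IsProbabilityMeasure P]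
    (X : ℕ → Ω → ℝ) (p : ℕ → ℝ → ℝ)
    (hX_meas : ∀ i, Measurable (X i))
    (hp_meas : ∀ i, Measurable (p i))
    (hp_nonneg : ∀ i x, 0 ≤ p i x)
    (hp_int : ∀ i, ∫ x, p i x = 1)
    (hindep : iIndepFun (fun i => X (i + 1)) P)
    (hdens : ∀ i : ℕ, HasDensity (X (i + 1)) P (p (i + 1)))
    (hMLR : ∀ (i : ℕ) (x y : ℝ), x ≤ y → p i y * p (i + 1) x ≤ p i x * p (i + 1) y) :
    ∀ (m : ℕ) (F : (Fin (m + 1) → ℝ) → ℝ),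
      Continuous F →
      (∀ (j : Fin (m + 1)) (x : Fin (m + 1) → ℝ) (a b : ℝ), a ≤ b →
        F (Function.update x j a) ≤ F (Function.update x j b)) →
      ∀ (n : ℕ), 1 ≤ n → ∀ (t : ℝ),
        P {ω | t ≤ F (fun j => X (n + (j : ℕ)) ω)}
          ≤ P {ω | t ≤ F (fun j => X (n + 1 + (j : ℕ)) ω)} := by
  intro m F hFc hFupd n hn t
  obtain ⟨k, rfl⟩ : ∃ k, n = k + 1 := ⟨n - 1, by omega⟩
  have hint : ∀ i, Integrable (p i) := by
    intro i
    by_contra hni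
    have := hp_int i
    rw [integral_undef hni] at this
    norm_num at this
  have hlint : ∀ i, ∫⁻ x, ENNReal.ofReal (p i x) = 1 := by
    intro i
    rw [← ofReal_integral_eq_lintegral_ofReal (hint i)
      (Filter.Eventually.of_forall (hp_nonneg i)), hp_int i, ENNReal.ofReal_one]
  have hMono : Monotone F := monotone_of_update F hFupd
  set S : Set (Fin (m + 1) → ℝ) := F ⁻¹' Set.Ici t with hS
  have hSm : MeasurableSet S := hFc.measurable measurableSet_Ici
  set g : (Fin (m + 1) → ℝ) → ℝ≥0∞ := S.indicator 1 with hg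
  have hgm : Measurable g := measurable_one.indicator hSm
  have hgmono : Monotone g := by
    intro x y hxy
    by_cases hx : x ∈ S
    · have hy : y ∈ S := by
        simp only [hS, Set.mem_preimage, Set.mem_Ici] at hx ⊢
        exact hx.trans (hMono hxy)
      simp [hg, hx, hy]
    · simp [hg, Set.indicator_of_notMem hx]
  have hg1 : ∀ x, g x ≤ 1 := by
    intro x
    by_cases hx : x ∈ S <;> simp [hg, hx]
  have law : ∀ k' : ℕ,
      P {ω | t ≤ F (fun j => X (k' + 1 + (j : ℕ)) ω)} =
        ∫⁻ x, g x ∂(Measure.pi fun j : Fin (m + 1) =>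
          volume.withDensity (fun x => ENNReal.ofReal (p (k' + (j : ℕ) + 1) x))) := by
    intro k'
    have hu : Function.Injective (fun j : Fin (m + 1) => k' + (j : ℕ)) := by
      intro a b hab
      simp only at hab
      exact Fin.ext (by omega)
    have hmap : Measure.map (fun ω (j : Fin (m + 1)) => X (k' + (j : ℕ) + 1) ω) P =
        Measure.pi (fun j : Fin (m + 1) => Measure.map (X (k' + (j : ℕ) + 1)) P) :=
      joint_law_eq_pi (fun i => hX_meas (i + 1)) hindep (fun j : Fin (m + 1) => k' + (j : ℕ)) hu
    have hidx : ∀ j : Fin (m + 1), k' + 1 + (j : ℕ) = k' + (j : ℕ) + 1 := fun j => by omega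
    have hset : {ω | t ≤ F (fun j => X (k' + 1 + (j : ℕ)) ω)} =
        (fun ω (j : Fin (m + 1)) => X (k' + (j : ℕ) + 1) ω) ⁻¹' S := by
      ext ω
      simp only [Set.mem_setOf_eq, Set.mem_preimage, hS, Set.mem_Ici]
      rw [show (fun j : Fin (m + 1) => X (k' + 1 + (j : ℕ)) ω)
          = fun j : Fin (m + 1) => X (k' + (j : ℕ) + 1) ω from funext fun j => by rw [hidx]]
    have hdq : (fun j : Fin (m + 1) => Measure.map (X (k' + (j : ℕ) + 1)) P) =
        fun j : Fin (m + 1) =>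
          volume.withDensity (fun x => ENNReal.ofReal (p (k' + (j : ℕ) + 1) x)) :=
      funext fun j => hdens (k' + (j : ℕ))
    rw [hset, ← Measure.map_apply (measurable_pi_lambda _ fun j => hX_meas _) hSm, hmap, hdq,
      ← lintegral_indicator_one hSm]
  rw [law k, law (k + 1)]
  refine pi_lintegral_mono (m + 1)
    (fun j x => ENNReal.ofReal (p (k + (j : ℕ) + 1) x))
    (fun j x => ENNReal.ofReal (p (k + 1 + (j : ℕ) + 1) x))
    (fun j => (hp_meas _).ennreal_ofReal) (fun j => (hp_meas _).ennreal_ofReal)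
    (fun j => hlint _) (fun j => hlint _) ?_ g hgm hgmono hg1
  intro j x y hxy
  have h1 : k + 1 + (j : ℕ) + 1 = (k + (j : ℕ) + 1) + 1 := by omega
  show ENNReal.ofReal (p (k + (j : ℕ) + 1) y) * ENNReal.ofReal (p (k + 1 + (j : ℕ) + 1) x) ≤
    ENNReal.ofReal (p (k + (j : ℕ) + 1) x) * ENNReal.ofReal (p (k + 1 + (j : ℕ) + 1) y)
  rw [h1, ← ENNReal.ofReal_mul (hp_nonneg _ y), ← ENNReal.ofReal_mul (hp_nonneg _ x)]
  exact ENNReal.ofReal_le_ofReal (hMLR (k + (j : ℕ) + 1) x y hxy)
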